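/- With E, Fᵢ and ξ as above (Fᵢ(ξ)=0, ξᵢ>0), if k ∈ {1,...,m−1} and v is the unique point with v₁,...,v_k > 0, F₁(v)=...=F_k(v)=0, v_{k+1}=...=v_m=0, then F_j(v) = −Σ_{l=1}^k n_l q_l² v_l² < 0 for every j ≥ k+1; in particular v ∉ Ω₊. -/

import Mathlib

open BigOperators

/-- E(Y) = Σᵢ nᵢ qᵢ² Yᵢ². -/
def flowE (m : ℕ) (n : Fin m → ℕ) (q : Fin m → ℝ) (Y : Fin m → ℝ) : ℝ :=
  ∑ j, (n j : ℝ) * q j ^ 2 * Y j ^ 2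

/-- Fᵢ(Y) = 2pᵢYᵢ − qᵢ²Yᵢ² − E(Y). -/
def flowF (m : ℕ) (n : Fin m → ℕ) (p q : Fin m → ℝ) (i : Fin m) (Y : Fin m → ℝ) : ℝ :=
  2 * p i * Y i - q i ^ 2 * Y i ^ 2 - flowE m n q Y

/-- Ω₊ = {Y ∈ ℝ^m : Yᵢ ≥ 0 and Fᵢ(Y) ≥ 0 for all i}. -/
def OmegaPlus (m : ℕ) (n : Fin m → ℕ) (p q : Fin m → ℝ) : Set (Fin m → ℝ) :=
  {Y | ∀ i, 0 ≤ Y i ∧ 0 ≤ flowF m n p q i Y}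

/-- for the partial zero v (positive on first k coordinates, zero on the
rest), F_j(v) = −Σ_{l<k} n_l q_l² v_l² < 0 for j ≥ k; in particular v ∉ Ω₊. -/
theorem stmt6 (m k : ℕ) (hk : 0 < k) (hkm : k < m)
    (n : Fin m → ℕ) (p q : Fin m → ℝ)
    (hn : ∀ i, 0 < n i) (hp : ∀ i, 0 < p i) (hq : ∀ i, q i ≠ 0)
    (v : Fin m → ℝ)
    (hv1 : ∀ i : Fin m, (i : ℕ) < k → 0 < v i ∧ flowF m n p q i v = 0)
    (hv2 : ∀ i : Fin m, k ≤ (i : ℕ) → v i = 0) :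
    (∀ j : Fin m, k ≤ (j : ℕ) →
      flowF m n p q j v
        = -(∑ l ∈ Finset.univ.filter (fun l : Fin m => (l : ℕ) < k),
            (n l : ℝ) * q l ^ 2 * v l ^ 2) ∧
      flowF m n p q j v < 0) ∧
    v ∉ OmegaPlus m n p q := by
  have hE : flowE m n q v
      = ∑ l ∈ Finset.univ.filter (fun l : Fin m => (l : ℕ) < k),
          (n l : ℝ) * q l ^ 2 * v l ^ 2 := by
    rw [flowE, ← Finset.sum_filter_add_sum_filter_not Finset.univ
      (fun l : Fin m => (l : ℕ) < k)]
    have : ∑ l ∈ Finset.univ.filter (fun l : Fin m => ¬ (l : ℕ) < k),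
        (n l : ℝ) * q l ^ 2 * v l ^ 2 = 0 := by
      apply Finset.sum_eq_zero
      intro l hl
      simp only [Finset.mem_filter, not_lt] at hl
      rw [hv2 l hl.2]; ring
    rw [this, add_zero]
  have hEpos : 0 < flowE m n q v := by
    rw [hE]
    apply Finset.sum_pos
    · intro l hl
      simp only [Finset.mem_filter] at hl
      have hv := (hv1 l hl.2).1
      have h1 : (0:ℝ) < n l := Nat.cast_pos.mpr (hn l)
      have h2 := hq l
      positivity
    · refine ⟨⟨0, lt_trans hk hkm⟩, ?_⟩
      simp [hk]
  have hmain : ∀ j : Fin m, k ≤ (j : ℕ) →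
      flowF m n p q j v
        = -(∑ l ∈ Finset.univ.filter (fun l : Fin m => (l : ℕ) < k),
            (n l : ℝ) * q l ^ 2 * v l ^ 2) ∧
      flowF m n p q j v < 0 := by
    intro j hj
    have hvj := hv2 j hj
    constructor
    · rw [flowF, hvj, hE]; ring
    · rw [flowF, hvj]
      simp only [mul_zero, ne_eq, OfNat.ofNat_ne_zero, not_false_eq_true,
        zero_pow, zero_sub, sub_zero]
      linarith
  refine ⟨hmain, fun h => ?_⟩
  have := (h ⟨k, hkm⟩).2
  have := (hmain ⟨k, hkm⟩ (le_refl k)).2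
  linarith
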